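/- arXiv:0801.4967 — 7 statements merged into one kernel-verified Lean document; each statement's English description precedes it below -/
import Mathlib

section
/- Let Y be a first-countable locally path-connected space and f : Y → X a function to a topological space X. If f ∘ g is continuous for every path g : [0,1] → Y, then f is continuous. -/
open Set Filter Topology

noncomputable def pcpN (t : ℝ) : ℕ := ⌊1/t⌋₊

noncomputable def pcpA (n : ℕ) (t : ℝ) : ℝ := 2 * ((n:ℝ) * (n+1) * t - n) - 1/2

noncomputable def pcpG {Y : Type*} [TopologicalSpace Y] {y : Y} (p : ℕ → Path y y) (t : ℝ) : Y :=
  p (pcpN t) (projIcc 0 1 zero_le_one (pcpA (pcpN t) t))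

lemma pcpN_eq {n : ℕ} (hn : 1 ≤ n) {t : ℝ} (h1 : 1/((n:ℝ)+1) < t) (h2 : t ≤ 1/(n:ℝ)) :
    pcpN t = n := by
  have hn' : (0:ℝ) < n := by exact_mod_cast hn
  have ht : 0 < t := lt_trans (by positivity) h1
  rw [pcpN, Nat.floor_eq_iff (by positivity)]
  constructor
  · rw [le_div_iff₀ ht]
    calc (n:ℝ) * t ≤ n * (1/n) := by nlinarith
    _ = 1 := by field_simp
  · rw [div_lt_iff₀ ht]
    have : 1/((n:ℝ)+1) * ((n:ℝ)+1) < t * ((n:ℝ)+1) := by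
      apply mul_lt_mul_of_pos_right h1 (by positivity)
    rw [one_div_mul_cancel (by positivity)] at this
    linarith

lemma pcpN_ge {m : ℕ} {t : ℝ} (h0 : 0 < t) (h : t < 1/(m:ℝ)) : m ≤ pcpN t := by
  apply Nat.le_floor
  rcases Nat.eq_zero_or_pos m with rfl | hm
  · simp
    positivity
  · have hm' : (0:ℝ) < m := by exact_mod_cast hm
    rw [le_div_iff₀ h0]
    have := mul_lt_mul_of_pos_left h hm'
    rw [mul_one_div, div_self (ne_of_gt hm')] at this
    linarith [mul_comm (m:ℝ) t]

lemma pcpG_of_nonpos {Y : Type*} [TopologicalSpace Y] {y : Y} (p : ℕ → Path y y) {t : ℝ}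
    (h : pcpA (pcpN t) t ≤ 0) : pcpG p t = y := by
  rw [pcpG, projIcc_of_le_left _ h]
  exact (p (pcpN t)).source

lemma pcpG_of_one_le {Y : Type*} [TopologicalSpace Y] {y : Y} (p : ℕ → Path y y) {t : ℝ}
    (h : 1 ≤ pcpA (pcpN t) t) : pcpG p t = y := by
  rw [pcpG, projIcc_of_right_le _ h]
  exact (p (pcpN t)).target

lemma pcpG_of_nonpos' {Y : Type*} [TopologicalSpace Y] {y : Y} (p : ℕ → Path y y) {t : ℝ}
    (h : t ≤ 0) : pcpG p t = y := by
  apply pcpG_of_nonpos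
  have : pcpN t = 0 := by
    rw [pcpN]
    apply Nat.floor_eq_zero.2
    rcases eq_or_lt_of_le h with rfl | h'
    · norm_num
    · have h1 : 1/t < 0 := by
        apply div_neg_of_pos_of_neg one_pos h'
      linarith
  rw [this, pcpA]
  norm_num

lemma pcpN_bounds {t : ℝ} (h0 : 0 < t) (h1 : t ≤ 1) :
    1 ≤ pcpN t ∧ 1/((pcpN t : ℝ)+1) < t ∧ t ≤ 1/(pcpN t : ℝ) := by
  have hge : 1 ≤ pcpN t := Nat.le_floor (by
    rw [Nat.cast_one, le_div_iff₀ h0]; linarith)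
  have hn' : (0:ℝ) < pcpN t := by exact_mod_cast hge
  have hfl : (pcpN t : ℝ) ≤ 1/t := Nat.floor_le (by positivity)
  have hfu : 1/t < (pcpN t : ℝ) + 1 := Nat.lt_floor_add_one _
  refine ⟨hge, ?_, ?_⟩
  · rw [div_lt_iff₀ (by positivity)]
    have := (div_lt_iff₀ h0).mp hfu
    nlinarith
  · rw [le_div_iff₀ hn']
    have := (le_div_iff₀ h0).mp hfl
    nlinarith

lemma pcpG_junction {Y : Type*} [TopologicalSpace Y] {y : Y} (p : ℕ → Path y y) {n : ℕ}
    (hn : 1 ≤ n) {s : ℝ} (hs : |s - 1/(n:ℝ)| < 1/(4*(n:ℝ)*((n:ℝ)+1))) : pcpG p s = y := by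
  have ha : (1:ℝ) ≤ (n:ℝ) := by exact_mod_cast hn
  have ha0 : (0:ℝ) < (n:ℝ) := by linarith
  rw [abs_lt] at hs
  obtain ⟨hs1, hs2⟩ := hs
  rcases le_or_gt s (1/(n:ℝ)) with hc | hc
  · have hgt : 1/((n:ℝ)+1) < s := by
      have key : 1/((n:ℝ)+1) < 1/(n:ℝ) - 1/(4*(n:ℝ)*((n:ℝ)+1)) := by
        rw [div_sub_div _ _ (ne_of_gt ha0) (by positivity),
          div_lt_div_iff₀ (by positivity) (by positivity)]
        ring_nf
        nlinarith
      linarith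
    have hN : pcpN s = n := pcpN_eq hn hgt hc
    apply pcpG_of_one_le
    rw [hN, pcpA]
    have e1 : (n:ℝ)*((n:ℝ)+1)*(1/(n:ℝ)) = (n:ℝ)+1 := by field_simp
    have e2 : (n:ℝ)*((n:ℝ)+1)*(1/(4*(n:ℝ)*((n:ℝ)+1))) = 1/4 := by field_simp
    nlinarith [mul_lt_mul_of_pos_left
      (show 1/(n:ℝ) - 1/(4*(n:ℝ)*((n:ℝ)+1)) < s by linarith)
      (show (0:ℝ) < (n:ℝ)*((n:ℝ)+1) by positivity)]
  · rcases eq_or_lt_of_le hn with h1 | h2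
    · -- n = 1
      have hn1 : (n:ℝ) = 1 := by exact_mod_cast h1.symm
      rw [hn1] at hc
      have hs1' : 1 < s := by linarith
      have hN : pcpN s = 0 := by
        rw [pcpN, Nat.floor_eq_zero]
        rw [div_lt_one (by linarith)]
        linarith
      apply pcpG_of_nonpos
      rw [hN, pcpA]
      norm_num
    · -- n ≥ 2
      have ha2 : (2:ℝ) ≤ (n:ℝ) := by exact_mod_cast h2
      have hb0 : (0:ℝ) < (n:ℝ) - 1 := by linarith
      have hcast : ((n-1 : ℕ) : ℝ) = (n:ℝ) - 1 := by
        rw [Nat.cast_sub hn, Nat.cast_one]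
      have hle : s ≤ 1/((n:ℝ)-1) := by
        have key : 1/(n:ℝ) + 1/(4*(n:ℝ)*((n:ℝ)+1)) ≤ 1/((n:ℝ)-1) := by
          rw [div_add_div _ _ (ne_of_gt ha0) (by positivity),
            div_le_div_iff₀ (by positivity) (by positivity)]
          ring_nf
          nlinarith
        linarith
      have hN : pcpN s = n - 1 := by
        apply pcpN_eq (by omega)
        · rw [hcast]
          have : ((n:ℝ)-1)+1 = (n:ℝ) := by ring
          rw [this]
          exact hc
        · rw [hcast]
          exact hle
      apply pcpG_of_nonpos
      rw [hN, pcpA, hcast]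
      have e1 : ((n:ℝ)-1)*(n:ℝ)*(1/(n:ℝ)) = (n:ℝ)-1 := by field_simp
      have e2 : ((n:ℝ)-1)*(n:ℝ)*(1/(4*(n:ℝ)*((n:ℝ)+1))) = ((n:ℝ)-1)/(4*((n:ℝ)+1)) := by
        field_simp
      have e3 : ((n:ℝ)-1)/(4*((n:ℝ)+1)) ≤ 1/4 := by
        rw [div_le_div_iff₀ (by positivity) (by norm_num)]
        linarith
      nlinarith [mul_lt_mul_of_pos_left
        (show s < 1/(n:ℝ) + 1/(4*(n:ℝ)*((n:ℝ)+1)) by linarith)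
        (show (0:ℝ) < ((n:ℝ)-1)*(n:ℝ) by positivity)]

lemma continuousAt_pcpG {Y : Type*} [TopologicalSpace Y] {y : Y} (p : ℕ → Path y y)
    {t : ℝ} (ht : t ≠ 0) : ContinuousAt (pcpG p) t := by
  rcases lt_or_gt_of_ne ht with h | h
  · -- t < 0 : locally constant
    apply continuousAt_const.congr
    filter_upwards [Iio_mem_nhds h] with s hs
    exact (pcpG_of_nonpos' p (le_of_lt hs)).symm
  · rcases lt_or_ge 1 t with h1 | h1
    · -- t > 1 : locally constant equal to y since pcpN = 0
      apply continuousAt_const.congr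
      filter_upwards [Ioi_mem_nhds h1] with s hs
      have hs' : 1 < s := hs
      have hN : pcpN s = 0 := by
        rw [pcpN, Nat.floor_eq_zero, div_lt_one (by linarith)]
        linarith
      refine (pcpG_of_nonpos p ?_).symm
      rw [hN, pcpA]
      norm_num
    · obtain ⟨hn1, hlow, hhigh⟩ := pcpN_bounds h h1
      set n := pcpN t with hndef
      have hn' : (0:ℝ) < (n:ℝ) := by exact_mod_cast hn1
      rcases eq_or_lt_of_le hhigh with heq | hlt
      · -- t = 1/n : junction
        apply continuousAt_const.congr
        have hpos : (0:ℝ) < 1/(4*(n:ℝ)*((n:ℝ)+1)) := by positivity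
        have hball : Ioo (t - 1/(4*(n:ℝ)*((n:ℝ)+1))) (t + 1/(4*(n:ℝ)*((n:ℝ)+1))) ∈ 𝓝 t :=
          Ioo_mem_nhds (by linarith) (by linarith)
        filter_upwards [hball] with s hs
        refine (pcpG_junction p hn1 ?_).symm
        rw [abs_lt, ← heq]
        exact ⟨by linarith [hs.1], by linarith [hs.2]⟩
      · -- 1/(n+1) < t < 1/n : open interval, congruent to continuous composite
        have : ContinuousAt (fun s : ℝ => (p n) (projIcc 0 1 zero_le_one (pcpA n s))) t := by
          apply Continuous.continuousAt
          apply (p n).continuous.comp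
          apply continuous_projIcc.comp
          unfold pcpA
          fun_prop
        apply this.congr
        filter_upwards [Ioo_mem_nhds hlow hlt] with s hs
        have hN : pcpN s = n := pcpN_eq hn1 hs.1 (le_of_lt hs.2)
        rw [pcpG, hN]

lemma pcpG_midpoint {Y : Type*} [TopologicalSpace Y] {y : Y} (p : ℕ → Path y y) {k : ℕ}
    (hk : 1 ≤ k) :
    pcpG p ((2*(k:ℝ)+1)/(2*(k:ℝ)*((k:ℝ)+1))) = p k ⟨1/2, by norm_num⟩ := by
  have hk' : (0:ℝ) < k := by exact_mod_cast hk
  set t := (2*(k:ℝ)+1)/(2*(k:ℝ)*((k:ℝ)+1)) with htdef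
  have h1 : 1/((k:ℝ)+1) < t := by
    rw [htdef, div_lt_div_iff₀ (by positivity) (by positivity)]
    nlinarith
  have h2 : t ≤ 1/(k:ℝ) := by
    rw [htdef, div_le_div_iff₀ (by positivity) hk']
    nlinarith
  have hN : pcpN t = k := pcpN_eq hk h1 h2
  have hA : pcpA k t = 1/2 := by
    rw [pcpA, htdef]
    field_simp
    ring
  rw [pcpG, hN, hA, projIcc_of_mem zero_le_one (by norm_num : (1/2:ℝ) ∈ Icc (0:ℝ) 1)]

/-- Let `Y` be a first-countable locally path-connected space and
`f : Y → X` a function to a topological space `X`. If `f ∘ g` is continuous for every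
path `g : [0,1] → Y`, then `f` is continuous. -/
theorem continuous_of_continuous_comp_paths {X Y : Type*} [TopologicalSpace X]
    [TopologicalSpace Y] [FirstCountableTopology Y]
    [LocallyPathConnectedSpace Y] (f : Y → X)
    (h : ∀ g : C(unitInterval, Y), Continuous (f ∘ g)) :
    Continuous f := by
  rw [continuous_iff_continuousAt]
  intro y
  rw [ContinuousAt, tendsto_def]
  by_contra hc
  push_neg at hc
  obtain ⟨V, hV, hVn⟩ := hc
  obtain ⟨B, hB⟩ := (𝓝 y).exists_antitone_basis
  have hU : ∀ n : ℕ, ∃ U : Set Y, (U ∈ 𝓝 y ∧ IsPathConnected U) ∧ U ⊆ B n := fun n =>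
    (path_connected_basis y).mem_iff.mp (hB.toHasBasis.mem_of_mem trivial)
  choose U hUn hUB using hU
  have hyn : ∀ n, ∃ z, z ∈ U n ∧ f z ∉ V := by
    intro n
    by_contra hno
    push_neg at hno
    exact hVn (mem_of_superset (hUn n).1 fun z hz => hno z hz)
  choose z hzU hzV using hyn
  have hyU : ∀ n, y ∈ U n := fun n => mem_of_mem_nhds (hUn n).1
  have hJ : ∀ n, JoinedIn (U n) y (z n) := fun n =>
    (hUn n).2.joinedIn y (hyU n) (z n) (hzU n)
  choose γ hγ using hJ
  set pl : ℕ → Path y y := fun n => (γ n).trans (γ n).symm with hpl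
  have hmem : ∀ n (u : unitInterval), pl n u ∈ U n := by
    intro n u
    have hr : pl n u ∈ range (pl n) := mem_range_self u
    rw [hpl] at hr
    simp only [Path.trans_range, Path.symm_range] at hr
    rcases hr with hr | hr <;> · obtain ⟨v, hv⟩ := hr; rw [← hv]; exact hγ n v
  have hmid : ∀ n, pl n ⟨1/2, by norm_num⟩ = z n := by
    intro n
    rw [hpl]
    simp only []
    rw [Path.trans_apply, dif_pos (by norm_num)]
    convert (γ n).target using 2
    apply Subtype.ext
    norm_num
  have hG0 : pcpG pl 0 = y := pcpG_of_nonpos' pl le_rfl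
  have hGcont : Continuous (pcpG pl) := by
    rw [continuous_iff_continuousAt]
    intro t
    rcases eq_or_ne t 0 with rfl | hne
    · rw [ContinuousAt, hG0, tendsto_def]
      intro W hW
      obtain ⟨m, -, hmW⟩ := hB.toHasBasis.mem_iff.mp hW
      have hm1 : (0:ℝ) < 1/(((m:ℝ))+1) := by positivity
      have hIoo : Ioo (-(1/(((m:ℝ))+1))) (1/(((m:ℝ))+1)) ∈ 𝓝 (0:ℝ) :=
        Ioo_mem_nhds (by linarith) hm1
      apply mem_of_superset hIoo
      rintro s ⟨hs1, hs2⟩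
      rcases le_or_gt s 0 with hs0 | hs0
      · rw [mem_preimage, pcpG_of_nonpos' pl hs0]
        exact mem_of_mem_nhds hW
      · have hge : m + 1 ≤ pcpN s := by
          apply pcpN_ge hs0
          push_cast
          exact hs2
        apply hmW
        apply hB.antitone (le_trans (Nat.le_succ m) hge)
        exact hUB (pcpN s) (hmem (pcpN s) _)
    · exact continuousAt_pcpG pl hne
  set g : C(unitInterval, Y) := ⟨fun u => pcpG pl u, hGcont.comp continuous_subtype_val⟩ with hg
  have hfg := h g
  have hcomp : Continuous (fun s : ℝ => (f ∘ g) (projIcc 0 1 zero_le_one s)) :=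
    hfg.comp continuous_projIcc
  have hval : (f ∘ g) (projIcc 0 1 zero_le_one 0) = f y := by
    simp only [Function.comp_apply, hg, ContinuousMap.coe_mk]
    rw [projIcc_left]
    show f (pcpG pl ((0:ℝ))) = f y
    rw [hG0]
  have hev : ∀ᶠ s : ℝ in 𝓝 0, (f ∘ g) (projIcc 0 1 zero_le_one s) ∈ V := by
    have hca := hcomp.continuousAt (x := 0)
    rw [ContinuousAt, hval] at hca
    exact hca.eventually hV
  have htend : Tendsto (fun k : ℕ => (2*(k:ℝ)+1)/(2*(k:ℝ)*((k:ℝ)+1))) atTop (𝓝 0) := by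
    apply squeeze_zero (fun k => by positivity) (fun k => ?_)
      tendsto_one_div_atTop_nhds_zero_nat
    rcases Nat.eq_zero_or_pos k with rfl | hk
    · norm_num
    · have hk' : (0:ℝ) < k := by exact_mod_cast hk
      rw [div_le_div_iff₀ (by positivity) hk']
      nlinarith
  obtain ⟨k, hkV, hk1⟩ := ((htend.eventually hev).and (eventually_ge_atTop 1)).exists
  apply hzV k
  have hk' : (0:ℝ) < k := by exact_mod_cast hk1
  have hk'' : (1:ℝ) ≤ k := by exact_mod_cast hk1
  have hmem01 : (2*(k:ℝ)+1)/(2*(k:ℝ)*((k:ℝ)+1)) ∈ Icc (0:ℝ) 1 := by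
    constructor
    · positivity
    · rw [div_le_one (by positivity)]
      nlinarith
  rw [Function.comp_apply] at hkV
  have hgval : g (projIcc 0 1 zero_le_one ((2*(k:ℝ)+1)/(2*(k:ℝ)*((k:ℝ)+1)))) = z k := by
    rw [hg]
    simp only [ContinuousMap.coe_mk]
    rw [projIcc_of_mem zero_le_one hmem01]
    show pcpG pl ((2*(k:ℝ)+1)/(2*(k:ℝ)*((k:ℝ)+1))) = z k
    rw [pcpG_midpoint pl hk1, hmid k]
  rw [hgval] at hkV
  exact hkV
end

section
/- Let X be a path-connected topological space and 𝒫 a class of path-connected locally path-connected spaces. The family 𝒯 of subsets U of X such that f⁻¹(U) is open in Z for every Z ∈ 𝒫 and every continuous map f : Z → X is a topology on X, and X equipped with 𝒯 is locally path-connected. -/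
/-- Let `X` be a path-connected space and `𝒫` a class of path-connected
locally path-connected (Peano) spaces, given as an indexed family `Z i`. The family `𝒯`
of subsets `U` of `X` such that `f ⁻¹' U` is open for every continuous `f : Z i → X`
is a topology on `X`, and `X` equipped with `𝒯` is locally path-connected. -/
theorem exists_topology_of_class_of_peano_spaces {X : Type*} [TopologicalSpace X]
    [PathConnectedSpace X] {ι : Type*} (Z : ι → Type*) [∀ i, TopologicalSpace (Z i)]
    [∀ i, PathConnectedSpace (Z i)] [∀ i, LocallyPathConnectedSpace (Z i)] :
    ∃ T : TopologicalSpace X,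
      (∀ U : Set X, T.IsOpen U ↔ ∀ (i : ι) (f : Z i → X), Continuous f → IsOpen (f ⁻¹' U)) ∧
      @LocallyPathConnectedSpace X T := by
  -- Index all originally-continuous maps from the class into `X`.
  let κ : Type _ := Σ i : ι, { f : Z i → X // Continuous f }
  -- The disjoint union of all domains, which is locally path-connected.
  let W : Type _ := Σ p : κ, Z p.1
  -- The combined map; `T` is the topology coinduced by it.
  let g : W → X := fun w => w.1.2.1 w.2
  let T : TopologicalSpace X := TopologicalSpace.coinduced g inferInstance
  -- Every originally-continuous map from a member of the class is `T`-continuous.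
  have hcont : ∀ p : κ, @Continuous _ _ _ T p.2.1 := by
    intro p
    rw [continuous_def]
    intro V hV
    rw [isOpen_coinduced, isOpen_sigma_iff] at hV
    exact hV p
  refine ⟨T, ?_, ?_⟩
  · intro U
    constructor
    · intro hU i f hf
      exact hf.isOpen_preimage U hU
    · intro h
      show @IsOpen X T U
      rw [isOpen_coinduced, isOpen_sigma_iff]
      intro p
      exact h p.1 p.2.1 (hcont p)
  · exact LocallyPathConnectedSpace.coinduced g
end

section
/- If f : X → Y is a Peano covering map and U is an open subset of Y, then the restriction f : f⁻¹(U) → U is a Peano covering map. -/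
/-- A continuous map `f : X → Y` is a Peano map if the path components of preimages of
open sets of `Y` form a basis of the topology of `X`. -/
def IsPeanoMap {X Y : Type*} [TopologicalSpace X] [TopologicalSpace Y] (f : X → Y) : Prop :=
  Continuous f ∧ TopologicalSpace.IsTopologicalBasis
    {S : Set X | ∃ (U : Set Y) (x : X), IsOpen U ∧ x ∈ f ⁻¹' U ∧ S = pathComponentIn (f ⁻¹' U) x}

/-- `f` is a Serre fibration: homotopy lifting property with respect to all cubes `Iⁿ`. -/
def IsSerreFibration {X Y : Type*} [TopologicalSpace X] [TopologicalSpace Y] (f : X → Y) : Prop :=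
  ∀ (n : ℕ) (H : C((Fin n → unitInterval) × unitInterval, Y)) (g : C(Fin n → unitInterval, X)),
    (∀ z, f (g z) = H (z, 0)) →
    ∃ G : C((Fin n → unitInterval) × unitInterval, X),
      (∀ p, f (G p) = H p) ∧ ∀ z, G (z, 0) = g z

/-- Every path component of every fiber of `f` is a single point. -/
def HasTrivialFiberPathComponents {X Y : Type*} [TopologicalSpace X] [TopologicalSpace Y]
    (f : X → Y) : Prop :=
  ∀ (y : Y) (a b : X), JoinedIn (f ⁻¹' {y}) a b → a = b

/-- A Peano covering map: a Peano map which is a Serre fibration and whose fibers have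
trivial path components. -/
def IsPeanoCoveringMap {X Y : Type*} [TopologicalSpace X] [TopologicalSpace Y]
    (f : X → Y) : Prop :=
  IsPeanoMap f ∧ IsSerreFibration f ∧ HasTrivialFiberPathComponents f


open Set TopologicalSpace in
/-- Joinedness in a subtype preimage corresponds to joinedness in the intersection. -/
lemma joinedIn_subtype_iff {X : Type*} [TopologicalSpace X] {s t : Set X} (a b : s) :
    JoinedIn (Subtype.val ⁻¹' t : Set s) a b ↔ JoinedIn (t ∩ s) (a : X) (b : X) := by
  constructor
  · intro h
    have := h.map (f := (Subtype.val : s → X)) continuous_subtype_val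
    refine this.mono ?_
    rintro x ⟨y, hy, rfl⟩
    exact ⟨hy, y.2⟩
  · rintro ⟨γ, hγ⟩
    refine ⟨⟨⟨fun u => ⟨γ u, (hγ u).2⟩, ?_⟩, ?_, ?_⟩, fun u => (hγ u).1⟩
    · exact γ.continuous.subtype_mk _
    · exact Subtype.ext γ.source
    · exact Subtype.ext γ.target

open Set TopologicalSpace in
lemma pathComponentIn_subtype {X : Type*} [TopologicalSpace X] {s t : Set X} (a : s) :
    pathComponentIn (Subtype.val ⁻¹' t : Set s) a
      = Subtype.val ⁻¹' (pathComponentIn (t ∩ s) (a : X)) := by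
  ext b
  simp only [pathComponentIn, mem_setOf_eq, mem_preimage]
  exact joinedIn_subtype_iff a b

/-- If `f : X → Y` is a Peano covering map and `U ⊆ Y` is open, then the
restriction `f : f⁻¹(U) → U` is a Peano covering map. -/
theorem isPeanoCoveringMap_restrict {X Y : Type*} [TopologicalSpace X]
    [TopologicalSpace Y] (f : X → Y) (hf : IsPeanoCoveringMap f) (U : Set Y)
    (hU : IsOpen U) :
    IsPeanoCoveringMap (fun x : (f ⁻¹' U) => (⟨f x, x.2⟩ : U)) := by
  open Set TopologicalSpace in
  obtain ⟨⟨hcont, hbasis⟩, hserre, htriv⟩ := hf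
  set s : Set X := f ⁻¹' U with hs
  set g : s → U := fun x => (⟨f x, x.2⟩ : U) with hg
  have hgpre : ∀ W : Set Y, g ⁻¹' (Subtype.val ⁻¹' W) = (Subtype.val ⁻¹' (f ⁻¹' W) : Set s) := by
    intro W; rfl
  refine ⟨⟨hcont.comp continuous_subtype_val |>.subtype_mk _, ?_⟩, ?_, ?_⟩
  · refine isTopologicalBasis_of_isOpen_of_nhds ?_ ?_
    · rintro S ⟨V, x, hV, hxV, rfl⟩
      obtain ⟨W, hW, rfl⟩ := isOpen_induced_iff.mp hV
      rw [hgpre, pathComponentIn_subtype]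
      refine continuous_subtype_val.isOpen_preimage _ ?_
      have : f ⁻¹' W ∩ s = f ⁻¹' (W ∩ U) := by rw [hs, preimage_inter]
      rw [this]
      refine hbasis.isOpen ⟨W ∩ U, (x : X), hW.inter hU, ?_, rfl⟩
      exact ⟨hxV, x.2⟩
    · intro x O hxO hO
      obtain ⟨O', hO', rfl⟩ := isOpen_induced_iff.mp hO
      have hx' : (x : X) ∈ O' ∩ s := ⟨hxO, x.2⟩
      obtain ⟨S, ⟨V, x₀, hV, hx₀, rfl⟩, hxS, hSO⟩ :=
        hbasis.exists_subset_of_mem_open hx' (hO'.inter (hcont.isOpen_preimage U hU))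
      have hxV : (x : X) ∈ f ⁻¹' V := pathComponentIn_subset hxS
      have hcongr : pathComponentIn (f ⁻¹' V) (x : X) = pathComponentIn (f ⁻¹' V) x₀ :=
        pathComponentIn_congr hxS
      refine ⟨pathComponentIn (g ⁻¹' (Subtype.val ⁻¹' V)) x,
        ⟨Subtype.val ⁻¹' V, x, isOpen_induced hV, hxV, rfl⟩, ?_, ?_⟩
      · exact mem_pathComponentIn_self hxV
      · rw [hgpre, pathComponentIn_subtype]
        intro b hb
        have : (b : X) ∈ pathComponentIn (f ⁻¹' V) (x : X) :=
          pathComponentIn_mono inter_subset_left hb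
        rw [hcongr] at this
        exact (hSO this).1
  · intro n H G0 hG0
    obtain ⟨G, hG, hG0'⟩ := hserre n
      ⟨fun p => ((H p : U) : Y), continuous_subtype_val.comp H.continuous⟩
      ⟨fun z => ((G0 z : s) : X), continuous_subtype_val.comp G0.continuous⟩
      (fun z => congrArg Subtype.val (hG0 z))
    have hmem : ∀ p, G p ∈ s := fun p => by
      rw [hs, Set.mem_preimage, hG p]; exact (H p).2
    refine ⟨⟨fun p => ⟨G p, hmem p⟩, G.continuous.subtype_mk _⟩, ?_, ?_⟩
    · intro p; exact Subtype.ext (hG p)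
    · intro z; exact Subtype.ext (hG0' z)
  · intro y a b hab
    have : JoinedIn (f ⁻¹' {(y : Y)}) (a : X) (b : X) := by
      have := hab.map (f := (Subtype.val : s → X)) continuous_subtype_val
      refine this.mono ?_
      rintro x ⟨z, hz, rfl⟩
      simpa using congrArg Subtype.val hz
    exact Subtype.ext (htriv _ _ _ this)
end

section
/- A path-connected topological space X has discrete fundamental group π₁(X,x₀) in the topology whose basic neighborhoods of a class [α] are the sets B([α], 𝒰) = {[α·λ] : λ ∈ π(𝒰,x₀)} indexed by open covers 𝒰 of X, if and only if X is semilocally simply connected. -/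
/-- The class of a loop in the fundamental group. -/
noncomputable def loopCls {X : Type*} [TopologicalSpace X] {x : X} (γ : Path x x) :
    FundamentalGroup X x :=
  FundamentalGroup.fromPath (⟦γ⟧ : Path.Homotopic.Quotient x x)

/-- `𝒰` is an open cover of `X`. -/
def IsOpenCover {X : Type*} [TopologicalSpace X] (𝒰 : Set (Set X)) : Prop :=
  (∀ U ∈ 𝒰, IsOpen U) ∧ ⋃₀ 𝒰 = Set.univ

/-- The Spanier subgroup `π(𝒰,x₀)` of `π₁(X,x₀)`: the subgroup generated by all classes
`[α * γ * α⁻¹]` where `γ` is a loop contained in some member of `𝒰` and `α` is a path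
from `x₀` to `γ(0)`. -/
noncomputable def spanierGroup {X : Type*} [TopologicalSpace X] (𝒰 : Set (Set X))
    (x₀ : X) : Subgroup (FundamentalGroup X x₀) :=
  Subgroup.closure {g | ∃ (x : X) (α : Path x₀ x) (γ : Path x x) (U : Set X),
    U ∈ 𝒰 ∧ Set.range γ ⊆ U ∧ g = loopCls ((α.trans γ).trans α.symm)}

/-- The topology on `π₁(X,x₀)` whose basic neighborhoods of `g` are the cosets
`g·π(𝒰,x₀)`, indexed by open covers `𝒰` of `X`. -/
noncomputable def piOneTopology (X : Type*) [TopologicalSpace X] (x₀ : X) :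
    TopologicalSpace (FundamentalGroup X x₀) :=
  TopologicalSpace.generateFrom
    {S | ∃ (g : FundamentalGroup X x₀) (𝒰 : Set (Set X)), IsOpenCover 𝒰 ∧
      S = {h | g⁻¹ * h ∈ spanierGroup 𝒰 x₀}}

/-- `X` is semilocally simply connected: every point has a neighborhood `U` such that
every loop in `U` is null-homotopic in `X`. -/
def IsSemilocallySimplyConnected (X : Type*) [TopologicalSpace X] : Prop :=
  ∀ x : X, ∃ U : Set X, IsOpen U ∧ x ∈ U ∧
    ∀ y ∈ U, ∀ γ : Path y y, Set.range γ ⊆ U →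
      (⟦γ⟧ : Path.Homotopic.Quotient y y) = ⟦Path.refl y⟧

open CategoryTheory

lemma loopCls_eq_one_iff {X : Type*} [TopologicalSpace X] {x : X} (γ : Path x x) :
    loopCls γ = 1 ↔ (⟦γ⟧ : Path.Homotopic.Quotient x x) = ⟦Path.refl x⟧ :=
  Iff.rfl

lemma conj_loopCls_eq_one_iff {X : Type*} [TopologicalSpace X] {x₀ x : X}
    (α : Path x₀ x) (γ : Path x x) :
    loopCls ((α.trans γ).trans α.symm) = 1 ↔
      (⟦γ⟧ : Path.Homotopic.Quotient x x) = ⟦Path.refl x⟧ := by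
  rw [loopCls_eq_one_iff]
  let a : (⟨x₀⟩ : FundamentalGroupoid X) ⟶ ⟨x⟩ := ⟦α⟧
  let g : (⟨x⟩ : FundamentalGroupoid X) ⟶ ⟨x⟩ := ⟦γ⟧
  have h1 : (⟦(α.trans γ).trans α.symm⟧ : Path.Homotopic.Quotient x₀ x₀)
      = (a ≫ g) ≫ Groupoid.inv a := by
    rfl
  have h2 : (⟦Path.refl x₀⟧ : Path.Homotopic.Quotient x₀ x₀)
      = 𝟙 (⟨x₀⟩ : FundamentalGroupoid X) := rfl
  have h3 : (⟦Path.refl x⟧ : Path.Homotopic.Quotient x x)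
      = 𝟙 (⟨x⟩ : FundamentalGroupoid X) := rfl
  rw [h1, h2, h3]
  show (a ≫ g) ≫ Groupoid.inv a = 𝟙 _ ↔ g = 𝟙 _
  rw [Groupoid.inv_eq_inv, IsIso.comp_inv_eq, Category.id_comp]
  constructor
  · intro h
    have := congrArg (fun p => inv a ≫ p) h
    simpa using this
  · intro h; rw [h, Category.comp_id]

lemma spanierGroup_mono {X : Type*} [TopologicalSpace X] {𝒰 𝒱 : Set (Set X)} (x₀ : X)
    (h : ∀ V ∈ 𝒱, ∃ U ∈ 𝒰, V ⊆ U) :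
    spanierGroup 𝒱 x₀ ≤ spanierGroup 𝒰 x₀ := by
  apply Subgroup.closure_mono
  rintro g ⟨x, α, γ, V, hV, hr, rfl⟩
  obtain ⟨U, hU, hVU⟩ := h V hV
  exact ⟨x, α, γ, U, hU, hr.trans hVU, rfl⟩

/-- A path-connected space `X` has discrete fundamental group
`π₁(X,x₀)` in the topology with basic neighborhoods `g·π(𝒰,x₀)` (over all open
covers `𝒰` of `X`) if and only if `X` is semilocally simply connected. -/
theorem discrete_piOne_iff_semilocallySimplyConnected (X : Type*) [TopologicalSpace X]
    [PathConnectedSpace X] (x₀ : X) :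
    @DiscreteTopology (FundamentalGroup X x₀) (piOneTopology X x₀) ↔
      IsSemilocallySimplyConnected X := by
  constructor
  · intro hd
    -- {1} is open, so some cover has trivial spanier group
    have h1 : (piOneTopology X x₀).IsOpen ({1} : Set (FundamentalGroup X x₀)) := by
      rw [hd.eq_bot]; trivial
    have key : ∀ s : Set (FundamentalGroup X x₀),
        TopologicalSpace.GenerateOpen
          {S | ∃ (g : FundamentalGroup X x₀) (𝒰 : Set (Set X)), IsOpenCover 𝒰 ∧
            S = {h | g⁻¹ * h ∈ spanierGroup 𝒰 x₀}} s →
        ∀ g ∈ s, ∃ 𝒰, IsOpenCover 𝒰 ∧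
          {h | g⁻¹ * h ∈ spanierGroup 𝒰 x₀} ⊆ s := by
      intro s hs
      induction hs with
      | basic s hs =>
        obtain ⟨g₀, 𝒰, h𝒰, rfl⟩ := hs
        intro g hg
        refine ⟨𝒰, h𝒰, fun h hh => ?_⟩
        have : g₀⁻¹ * h = (g₀⁻¹ * g) * (g⁻¹ * h) := by group
        show g₀⁻¹ * h ∈ spanierGroup 𝒰 x₀; rw [this]; exact mul_mem (show g₀⁻¹ * g ∈ spanierGroup 𝒰 x₀ from hg) (show g⁻¹ * h ∈ spanierGroup 𝒰 x₀ from hh)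
      | univ =>
        intro g _
        refine ⟨{Set.univ}, ⟨by simp, by simp⟩, by simp⟩
      | inter s t hs ht ihs iht =>
        intro g hg
        obtain ⟨𝒰₁, h1c, sub1⟩ := ihs g hg.1
        obtain ⟨𝒰₂, h2c, sub2⟩ := iht g hg.2
        refine ⟨Set.image2 (· ∩ ·) 𝒰₁ 𝒰₂, ⟨?_, ?_⟩, ?_⟩
        · rintro W ⟨U, hU, V, hV, rfl⟩
          exact (h1c.1 U hU).inter (h2c.1 V hV)
        · apply Set.eq_univ_of_forall
          intro x
          have hx1 : x ∈ ⋃₀ 𝒰₁ := by rw [h1c.2]; trivial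
          have hx2 : x ∈ ⋃₀ 𝒰₂ := by rw [h2c.2]; trivial
          obtain ⟨U, hU, hxU⟩ := hx1
          obtain ⟨V, hV, hxV⟩ := hx2
          exact ⟨U ∩ V, ⟨U, hU, V, hV, rfl⟩, hxU, hxV⟩
        · intro h hh
          have le1 : spanierGroup (Set.image2 (· ∩ ·) 𝒰₁ 𝒰₂) x₀ ≤ spanierGroup 𝒰₁ x₀ :=
            spanierGroup_mono x₀ (by rintro W ⟨U, hU, V, hV, rfl⟩; exact ⟨U, hU, Set.inter_subset_left⟩)
          have le2 : spanierGroup (Set.image2 (· ∩ ·) 𝒰₁ 𝒰₂) x₀ ≤ spanierGroup 𝒰₂ x₀ :=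
            spanierGroup_mono x₀ (by rintro W ⟨U, hU, V, hV, rfl⟩; exact ⟨V, hV, Set.inter_subset_right⟩)
          exact ⟨sub1 (le1 hh), sub2 (le2 hh)⟩
      | sUnion S hS ih =>
        intro g hg
        obtain ⟨s, hsS, hgs⟩ := hg
        obtain ⟨𝒰, hc, sub⟩ := ih s hsS g hgs
        exact ⟨𝒰, hc, sub.trans (Set.subset_sUnion_of_mem hsS)⟩
    obtain ⟨𝒰, h𝒰, hsub⟩ := key _ h1 1 rfl
    -- spanier group of 𝒰 is trivial
    have htriv : ∀ k ∈ spanierGroup 𝒰 x₀, k = 1 := by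
      intro k hk
      have : k ∈ ({1} : Set (FundamentalGroup X x₀)) := hsub (show (1 : FundamentalGroup X x₀)⁻¹ * k ∈ spanierGroup 𝒰 x₀ by rwa [inv_one, one_mul])
      simpa using this
    intro x
    have hx : x ∈ ⋃₀ 𝒰 := by rw [h𝒰.2]; trivial
    obtain ⟨U, hU, hxU⟩ := hx
    refine ⟨U, h𝒰.1 U hU, hxU, fun y _ γ hγ => ?_⟩
    obtain ⟨α⟩ := PathConnectedSpace.joined x₀ y
    have hg : loopCls ((α.trans γ).trans α.symm) ∈ spanierGroup 𝒰 x₀ :=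
      Subgroup.subset_closure ⟨y, α, γ, U, hU, hγ, rfl⟩
    exact (conj_loopCls_eq_one_iff α γ).mp (htriv _ hg)
  · intro hslsc
    set 𝒰 : Set (Set X) := {U | IsOpen U ∧ ∀ y ∈ U, ∀ γ : Path y y, Set.range γ ⊆ U →
      (⟦γ⟧ : Path.Homotopic.Quotient y y) = ⟦Path.refl y⟧} with h𝒰def
    have hcov : IsOpenCover 𝒰 := by
      constructor
      · exact fun U hU => hU.1
      · apply Set.eq_univ_of_forall
        intro x
        obtain ⟨U, hUo, hxU, hP⟩ := hslsc x
        exact ⟨U, ⟨hUo, hP⟩, hxU⟩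
    have htriv : spanierGroup 𝒰 x₀ = ⊥ := by
      apply le_antisymm _ bot_le
      rw [spanierGroup, Subgroup.closure_le]
      rintro g ⟨x, α, γ, U, hU, hr, rfl⟩
      have hx : x ∈ U := hr ⟨0, by simp⟩
      simpa [Subgroup.mem_bot] using (conj_loopCls_eq_one_iff α γ).mpr (hU.2 x hx γ hr)
    letI := piOneTopology X x₀
    refine discreteTopology_iff_isOpen_singleton.mpr ?_
    intro g
    have : ({g} : Set (FundamentalGroup X x₀)) = {h | g⁻¹ * h ∈ spanierGroup 𝒰 x₀} := by
      ext h
      rw [Set.mem_singleton_iff, Set.mem_setOf_eq, htriv, Subgroup.mem_bot, inv_mul_eq_one, eq_comm]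
    rw [this]
    exact TopologicalSpace.isOpen_generateFrom_of_mem ⟨g, 𝒰, hcov, rfl⟩
end

section
/- Let X be a pointed topological space with base point x₀, and give π₁(X,x₀) the topology with basic open sets B(g,𝒰) = g·π(𝒰,x₀) indexed by open covers 𝒰 of X. Then the closure of the trivial subgroup equals the intersection of π(𝒰,x₀) over all open covers 𝒰 of X. -/
/-- In the topology on `π₁(X,x₀)` with basic open sets `g·π(𝒰,x₀)`, the
closure of the trivial subgroup equals the intersection of `π(𝒰,x₀)` over all open
covers `𝒰` of `X`. -/
theorem closure_trivialSubgroup_eq_iInter_spanier (X : Type*) [TopologicalSpace X]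
    (x₀ : X) :
    @closure (FundamentalGroup X x₀) (piOneTopology X x₀)
        ((⊥ : Subgroup (FundamentalGroup X x₀)) : Set (FundamentalGroup X x₀)) =
      ⋂ (𝒰 : Set (Set X)) (_ : IsOpenCover 𝒰),
        (spanierGroup 𝒰 x₀ : Set (FundamentalGroup X x₀)) := by

  letI t : TopologicalSpace (FundamentalGroup X x₀) := piOneTopology X x₀
  ext x
  simp only [Set.mem_iInter, SetLike.mem_coe]
  constructor
  · intro hx 𝒰 h𝒰
    have hS : IsOpen {h : FundamentalGroup X x₀ | x⁻¹ * h ∈ spanierGroup 𝒰 x₀} :=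
      TopologicalSpace.isOpen_generateFrom_of_mem ⟨x, 𝒰, h𝒰, rfl⟩
    obtain ⟨y, hyS, hy1⟩ := _root_.mem_closure_iff.mp hx _ hS (by show x⁻¹ * x ∈ spanierGroup 𝒰 x₀; rw [inv_mul_cancel]; exact one_mem _)
    have hy : y = 1 := by simpa [Subgroup.mem_bot] using hy1
    subst hy
    have : x⁻¹ ∈ spanierGroup 𝒰 x₀ := by simpa using hyS
    simpa using inv_mem this
  · intro hx
    rw [_root_.mem_closure_iff]
    intro o ho hxo
    suffices h : (1 : FundamentalGroup X x₀) ∈ o by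
      exact ⟨1, h, by simp [Subgroup.mem_bot]⟩
    clear_value t
    revert hxo
    induction ho with
    | basic s hs =>
      intro hxo
      obtain ⟨g, 𝒰, h𝒰, rfl⟩ := hs
      have hg : g⁻¹ * x ∈ spanierGroup 𝒰 x₀ := hxo
      have hginv : g⁻¹ ∈ spanierGroup 𝒰 x₀ := by
        have := mul_mem hg (inv_mem (hx 𝒰 h𝒰))
        rwa [mul_inv_cancel_right] at this
      simpa using hginv
    | univ => intro _; trivial
    | inter s u _ _ ihs ihu => intro hxo; exact ⟨ihs hxo.1, ihu hxo.2⟩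
    | sUnion S _ ih =>
      intro hxo
      obtain ⟨s, hs, hxs⟩ := hxo
      exact ⟨s, hs, ih s hs hxs⟩
end

section
/- Let G ⊆ H be subgroups of π₁(X,x₀) with G normal in π₁(X,x₀), and suppose H/G is countable and X is (H,G)-homotopically Hausdorff. Then the natural map X̂_G → X̂_H (endpoint-respecting projections of path classes, with the Spanier whisker topology) has the uniqueness of path lifts property. -/
/-- Paths in `X` originating at `x₀`, recorded together with their endpoint. -/
abbrev PathFrom (X : Type*) [TopologicalSpace X] (x₀ : X) := Σ x : X, Path x₀ x

/-- The relation `α ∼_H β`: same endpoint and `[α * β⁻¹] ∈ H`. -/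
def relH {X : Type*} [TopologicalSpace X] {x₀ : X} (H : Subgroup (FundamentalGroup X x₀))
    (a b : PathFrom X x₀) : Prop :=
  ∃ h : a.1 = b.1, loopCls (a.2.trans (b.2.cast rfl h).symm) ∈ H

/-- The set `X̃_H` of `∼_H`-classes of paths in `X` originating at `x₀`. -/
def PathSpace {X : Type*} [TopologicalSpace X] {x₀ : X}
    (H : Subgroup (FundamentalGroup X x₀)) : Type _ :=
  Quot (relH H)

/-- The class of a path in `X̃_H`. -/
def PathSpace.mk {X : Type*} [TopologicalSpace X] {x₀ : X}
    (H : Subgroup (FundamentalGroup X x₀)) (a : PathFrom X x₀) : PathSpace H :=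
  Quot.mk _ a

/-- The base point of `X̃_H`: the class of the constant path at `x₀`. -/
def PathSpace.base {X : Type*} [TopologicalSpace X] {x₀ : X}
    (H : Subgroup (FundamentalGroup X x₀)) : PathSpace H :=
  PathSpace.mk H ⟨x₀, Path.refl x₀⟩

/-- The endpoint projection `X̃_H → X`. -/
def endpointProj {X : Type*} [TopologicalSpace X] {x₀ : X}
    (H : Subgroup (FundamentalGroup X x₀)) : PathSpace H → X :=
  Quot.lift (fun a => a.1) (fun _ _ hab => hab.choose)

/-- The basic set `B_H([α]_H, U)` of the Spanier whisker topology on `X̂_H`. -/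
def whiskerBasic {X : Type*} [TopologicalSpace X] {x₀ : X}
    (H : Subgroup (FundamentalGroup X x₀)) (a : PathFrom X x₀) (U : Set X) :
    Set (PathSpace H) :=
  {q | ∃ (b : PathFrom X x₀) (γ : Path a.1 b.1), Set.range γ ⊆ U ∧
    relH H b ⟨b.1, a.2.trans γ⟩ ∧ q = PathSpace.mk H b}

/-- The Spanier whisker topology on `X̂_H`. -/
def whiskerTopology {X : Type*} [TopologicalSpace X] {x₀ : X}
    (H : Subgroup (FundamentalGroup X x₀)) : TopologicalSpace (PathSpace H) :=
  TopologicalSpace.generateFrom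
    {S | ∃ (a : PathFrom X x₀) (U : Set X), IsOpen U ∧ a.1 ∈ U ∧ S = whiskerBasic H a U}

/-- The natural projection `X̂_G → X̂_H` for `G ≤ H`. -/
def pathSpaceProj {X : Type*} [TopologicalSpace X] {x₀ : X}
    {G H : Subgroup (FundamentalGroup X x₀)} (hGH : G ≤ H) :
    PathSpace G → PathSpace H :=
  Quot.lift (PathSpace.mk H)
    (fun _ _ hab => Quot.sound ⟨hab.choose, hGH hab.choose_spec⟩)

/-- `X` is `(H,G)`-homotopically Hausdorff: for every `h ∈ H ∖ G` and every path `α`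
from `x₀`, there is an open neighborhood `U` of `α(1)` such that no element of `G·h`
equals `[α * γ * α⁻¹]` for a loop `γ` in `U` at `α(1)`. -/
def HomotopicallyHausdorffRel {X : Type*} [TopologicalSpace X] (x₀ : X)
    (H G : Subgroup (FundamentalGroup X x₀)) : Prop :=
  ∀ h ∈ H, h ∉ G → ∀ (x : X) (α : Path x₀ x), ∃ U : Set X, IsOpen U ∧ x ∈ U ∧
    ∀ γ : Path x x, Set.range γ ⊆ U → ∀ g ∈ G,
      g * h ≠ loopCls ((α.trans γ).trans α.symm)

section Infra
open CategoryTheory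
variable {X : Type*} [TopologicalSpace X]

attribute [local instance] Path.Homotopic.setoid

def pc {x y : X} (p : Path x y) : FundamentalGroupoid.mk x ⟶ FundamentalGroupoid.mk y := ⟦p⟧

lemma pc_trans {x y z : X} (p : Path x y) (q : Path y z) : pc (p.trans q) = pc p ≫ pc q :=
  rfl

lemma pc_refl (x : X) : pc (Path.refl x) = 𝟙 (FundamentalGroupoid.mk x) := rfl

lemma pc_symm {x y : X} (p : Path x y) : pc p.symm = CategoryTheory.inv (pc p) := by
  rw [← Groupoid.inv_eq_inv]; rfl

lemma cast_rfl_rfl {x y : X} (p : Path x y) (h : x = x) (h' : y = y) : p.cast h h' = p := rfl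

lemma loopCls_hom {x : X} (γ : Path x x) : FundamentalGroup.toArrow (loopCls γ) = pc γ := rfl

lemma loopCls_eq_iff {x : X} {γ δ : Path x x} : loopCls γ = loopCls δ ↔ pc γ = pc δ :=
  Iff.rfl

lemma loopCls_mul {x : X} (γ δ : Path x x) : loopCls γ * loopCls δ = loopCls (δ.trans γ) := by
  rfl

lemma loopCls_one {x : X} : loopCls (Path.refl x) = 1 := by
  rfl

lemma loopCls_inv {x : X} (γ : Path x x) : (loopCls γ)⁻¹ = loopCls γ.symm := by
  rfl

section PL
variable {x₀ : X}

-- PL1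
lemma PL1 {x : X} (p : Path x₀ x) (h : x = x) :
    loopCls (p.trans ((p.cast rfl h).symm)) = 1 := by
  simp only [cast_rfl_rfl]
  rw [← loopCls_one, loopCls_eq_iff]
  simp [pc_trans, pc_symm, pc_refl]

-- PL2
lemma PL2 {x y : X} (p : Path x₀ x) (q : Path x₀ y) (e : x = y) :
    loopCls (q.trans ((p.cast rfl e.symm).symm)) =
      (loopCls (p.trans ((q.cast rfl e).symm)))⁻¹ := by
  subst e
  simp only [cast_rfl_rfl]
  rw [loopCls_inv, loopCls_eq_iff]
  simp [pc_trans, pc_symm]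

-- PL3
lemma PL3 {x y z : X} (p : Path x₀ x) (q : Path x₀ y) (r : Path x₀ z) (e₁ : x = y) (e₂ : y = z) :
    loopCls (p.trans ((r.cast rfl (e₁.trans e₂)).symm)) =
      loopCls (q.trans ((r.cast rfl e₂).symm)) * loopCls (p.trans ((q.cast rfl e₁).symm)) := by
  subst e₁; subst e₂
  simp only [cast_rfl_rfl]
  rw [loopCls_mul, loopCls_eq_iff]
  simp [pc_trans, pc_symm]

-- PL4 (for self-membership of whisker basic)
lemma PL4 {x : X} (p : Path x₀ x) (h : x = x) :
    loopCls (p.trans (((p.trans (Path.refl x)).cast rfl h).symm)) = 1 := by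
  simp only [cast_rfl_rfl]
  rw [← loopCls_one, loopCls_eq_iff]
  simp [pc_trans, pc_symm, pc_refl]

-- PL5 (keyD identity)
lemma PL5 {xa xb xa' xb' : X} (p : Path x₀ xa) (q : Path x₀ xb) (p' : Path x₀ xa')
    (q' : Path x₀ xb') (e : xa = xb) (e' : xa' = xb') (ea : xa = xa') (eb : xb = xb') :
    loopCls (p'.trans ((q'.cast rfl e').symm)) =
      loopCls (q.trans ((q'.cast rfl eb).symm)) * loopCls (p.trans ((q.cast rfl e).symm)) *
        (loopCls (p.trans ((p'.cast rfl ea).symm)))⁻¹ := by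
  subst e'; subst e; subst ea
  simp only [cast_rfl_rfl]
  rw [loopCls_inv, loopCls_mul, loopCls_mul, loopCls_eq_iff]
  simp [pc_trans, pc_symm]

-- PL6 (star identity)
lemma PL6 {xa xb ya yb : X} (p : Path x₀ xa) (q : Path x₀ xb) (γ : Path xa ya) (δ : Path xb yb)
    (e : xa = xb) (e2 : ya = yb) :
    loopCls ((q.trans ((γ.cast e.symm rfl).trans ((δ.cast rfl e2).symm))).trans q.symm) *
      loopCls (p.trans ((q.cast rfl e).symm)) =
        loopCls ((p.trans γ).trans (((q.trans δ).cast rfl e2).symm)) := by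
  subst e; subst e2
  simp only [cast_rfl_rfl]
  rw [loopCls_mul, loopCls_eq_iff]
  simp [pc_trans, pc_symm]
end PL

end Infra

section Infra2
open CategoryTheory
section Aux2
open CategoryTheory
variable {X : Type*} [TopologicalSpace X] {x₀ : X}

lemma relH_equivalence (K : Subgroup (FundamentalGroup X x₀)) : Equivalence (relH K) := by
  constructor
  · intro a
    exact ⟨rfl, by rw [PL1]; exact K.one_mem⟩
  · rintro a b ⟨e, m⟩
    refine ⟨e.symm, ?_⟩
    rw [PL2 a.2 b.2 e]
    exact K.inv_mem m
  · rintro a b c ⟨e₁, m₁⟩ ⟨e₂, m₂⟩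
    refine ⟨e₁.trans e₂, ?_⟩
    rw [PL3 a.2 b.2 c.2 e₁ e₂]
    exact K.mul_mem m₂ m₁

lemma mk_eq_iff {K : Subgroup (FundamentalGroup X x₀)} {a b : PathFrom X x₀} :
    PathSpace.mk K a = PathSpace.mk K b ↔ relH K a b := by
  constructor
  · intro h
    exact ((relH_equivalence K).eqvGen_iff).mp (Quot.eqvGen_exact h)
  · exact Quot.sound

lemma relH_fst {K : Subgroup (FundamentalGroup X x₀)} {a b : PathFrom X x₀}
    (h : relH K a b) : a.1 = b.1 := h.1

lemma self_mem_whiskerBasic {K : Subgroup (FundamentalGroup X x₀)} {a : PathFrom X x₀}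
    {U : Set X} (hU : a.1 ∈ U) : PathSpace.mk K a ∈ whiskerBasic K a U := by
  refine ⟨a, Path.refl a.1, ?_, ⟨rfl, ?_⟩, ?_⟩
  · rw [Path.refl_range]; exact Set.singleton_subset_iff.mpr hU
  · rw [PL4]; exact K.one_mem
  · rfl

lemma isOpen_whiskerBasic {K : Subgroup (FundamentalGroup X x₀)} {a : PathFrom X x₀}
    {U : Set X} (hUo : IsOpen U) (hU : a.1 ∈ U) :
    @IsOpen _ (whiskerTopology K) (whiskerBasic K a U) :=
  TopologicalSpace.isOpen_generateFrom_of_mem ⟨a, U, hUo, hU, rfl⟩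

/-- transfer of the comparison element along `G`-equivalences -/
lemma keyD {G : Subgroup (FundamentalGroup X x₀)} {a b a' b' : PathFrom X x₀}
    (e : a.1 = b.1) (e' : a'.1 = b'.1)
    (ha : relH G a a') (hb : relH G b b') :
    ∃ g₁ ∈ G, ∃ g₂ ∈ G,
      loopCls (a'.2.trans ((b'.2.cast rfl e').symm)) =
        g₁ * loopCls (a.2.trans ((b.2.cast rfl e).symm)) * g₂ := by
  obtain ⟨ea, ma⟩ := ha
  obtain ⟨eb, mb⟩ := hb
  exact ⟨_, mb, _, G.inv_mem ma, PL5 a.2 b.2 a'.2 b'.2 e e' ea eb⟩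

lemma quot_congr {G H : Subgroup (FundamentalGroup X x₀)} (hnorm : G.Normal)
    (h₁ h₂ : H) {g₁ g₂ : FundamentalGroup X x₀} (hg₁ : g₁ ∈ G) (hg₂ : g₂ ∈ G)
    (hrep : (h₂ : FundamentalGroup X x₀) = g₁ * h₁ * g₂) :
    (QuotientGroup.mk h₁ : H ⧸ G.subgroupOf H) = QuotientGroup.mk h₂ := by
  rw [QuotientGroup.eq]
  rw [Subgroup.mem_subgroupOf]
  push_cast
  rw [hrep]
  have : ((h₁ : FundamentalGroup X x₀))⁻¹ * (g₁ * ↑h₁ * g₂) =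
      (((h₁ : FundamentalGroup X x₀))⁻¹ * g₁ * ↑h₁) * g₂ := by group
  rw [this]
  exact G.mul_mem (hnorm.conj_mem' g₁ hg₁ h₁) hg₂
end Aux2

end Infra2

section Sierp
open Set Metric

lemma sierpinski_interval {ι : Type*} [Countable ι] (f : unitInterval → ι)
    (hf : ∀ i : ι, IsClosed (f ⁻¹' {i})) (x y : unitInterval) : f x = f y := by
  classical
  set U : Set unitInterval := ⋃ i, interior (f ⁻¹' {i}) with hUdef
  by_cases hF : Uᶜ = ∅
  · -- all fibers are open, hence clopen; conclude by connectedness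
    have hop : ∀ z : unitInterval, z ∈ interior (f ⁻¹' {f z}) := by
      intro z
      have hz : z ∈ U := by
        by_contra h
        exact (Set.eq_empty_iff_forall_notMem.mp hF z) h
      obtain ⟨i, hi⟩ := Set.mem_iUnion.mp hz
      have hzi : z ∈ f ⁻¹' {i} := interior_subset hi
      have : f z = i := hzi
      rwa [this]
    have hclopen : IsClopen (f ⁻¹' {f x}) := by
      refine ⟨hf _, ?_⟩
      rw [isOpen_iff_mem_nhds]
      intro z hz
      have := hop z
      rw [show f z = f x from hz] at this
      exact mem_interior_iff_mem_nhds.mp this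
    rcases isClopen_iff.mp hclopen with h | h
    · exact absurd (show x ∈ f ⁻¹' {f x} from rfl) (by rw [h]; exact notMem_empty x)
    · have : y ∈ f ⁻¹' {f x} := by rw [h]; trivial
      exact this.symm
  · exfalso
    have hFne : (Uᶜ : Set unitInterval).Nonempty := Set.nonempty_iff_ne_empty.mpr hF
    have hUo : IsOpen U := isOpen_iUnion fun i => isOpen_interior
    have hFc : IsClosed (Uᶜ : Set unitInterval) := hUo.isClosed_compl
    haveI : Nonempty (Uᶜ : Set unitInterval) := hFne.to_subtype
    haveI : CompleteSpace unitInterval := complete_of_compact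
    haveI : CompleteSpace (Uᶜ : Set unitInterval) := hFc.completeSpace_coe
    set C : ι → Set (Uᶜ : Set unitInterval) :=
      fun i => (fun w : (Uᶜ : Set unitInterval) => (w : unitInterval)) ⁻¹' (f ⁻¹' {i}) with hC
    have hCc : ∀ i, IsClosed (C i) := fun i => (hf i).preimage continuous_subtype_val
    have hCu : ⋃ i, C i = univ := by
      ext w; simp only [mem_iUnion, mem_univ, iff_true]
      exact ⟨f w, rfl⟩
    obtain ⟨i₀, z', hz'⟩ := nonempty_interior_of_iUnion_of_closed hCc hCu
    obtain ⟨ε, hε, hball⟩ := Metric.mem_nhds_iff.mp (mem_interior_iff_mem_nhds.mp hz')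
    set z : unitInterval := (z' : unitInterval) with hzdef
    have hzi₀ : f z = i₀ := hball (mem_ball_self hε)
    have hzF : z ∈ (Uᶜ : Set unitInterval) := z'.2
    -- there is a nearby point in a different fiber
    have hnot : ¬ (ball z ε ⊆ f ⁻¹' {i₀}) := by
      intro hsub
      apply hzF
      exact Set.mem_iUnion.mpr ⟨i₀, mem_interior_iff_mem_nhds.mpr
        (Filter.mem_of_superset (Metric.ball_mem_nhds z hε) hsub)⟩
    obtain ⟨w, hwball, hwne⟩ := Set.not_subset.mp hnot
    set m : ι := f w with hm
    have hmne : m ≠ i₀ := fun h => hwne (by rw [← h]; rfl)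
    -- the set of points between z and w (inclusive) in the fiber of m
    set T : Set unitInterval :=
      {v | min (z : ℝ) (w : ℝ) ≤ (v : ℝ) ∧ (v : ℝ) ≤ max (z : ℝ) (w : ℝ) ∧ f v = m} with hT
    have hTc : IsClosed T := by
      apply IsClosed.inter
      · exact isClosed_le continuous_const continuous_subtype_val
      · exact IsClosed.inter (isClosed_le continuous_subtype_val continuous_const) (hf m)
    have hwT : w ∈ T := ⟨min_le_right _ _, le_max_right _ _, rfl⟩
    have hTcpt : IsCompact T := hTc.isCompact
    obtain ⟨v₀, hv₀T, hv₀min⟩ := hTcpt.exists_isMinOn ⟨w, hwT⟩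
      ((continuous_id.dist continuous_const).continuousOn :
        ContinuousOn (fun v : unitInterval => dist v z) T)
    have hfv₀ : f v₀ = m := hv₀T.2.2
    have hv₀z : v₀ ≠ z := fun h => hmne (by rw [← hfv₀, h, hzi₀])
    have hd : (0 : ℝ) < dist v₀ z := dist_pos.mpr hv₀z
    -- v₀ is not in U
    have hv₀F : v₀ ∈ (Uᶜ : Set unitInterval) := by
      intro hv₀U
      obtain ⟨j, hj⟩ := Set.mem_iUnion.mp hv₀U
      have hjm : j = m := by
        have hvj : v₀ ∈ f ⁻¹' {j} := interior_subset hj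
        have : f v₀ = j := hvj
        rw [← this, hfv₀]
      rw [hjm] at hj
      obtain ⟨δ, hδ, hδball⟩ := Metric.mem_nhds_iff.mp (mem_interior_iff_mem_nhds.mp hj)
      -- construct a point of T strictly closer to z
      set d : ℝ := dist v₀ z with hddef
      set θ : ℝ := min (1/2) (δ / (2 * d)) with hθ
      have hθpos : 0 < θ := lt_min (by norm_num) (div_pos hδ (by linarith))
      have hθle : θ ≤ 1/2 := min_le_left _ _
      set tv : ℝ := (v₀ : ℝ) + θ * ((z : ℝ) - (v₀ : ℝ)) with htv
      have htv01 : tv ∈ unitInterval := by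
        constructor
        · have h0v : (0:ℝ) ≤ (v₀ : ℝ) := v₀.2.1
          have h0z : (0:ℝ) ≤ (z : ℝ) := z.2.1
          nlinarith [hθpos, hθle]
        · have h1v : (v₀ : ℝ) ≤ 1 := v₀.2.2
          have h1z : (z : ℝ) ≤ 1 := z.2.2
          nlinarith [hθpos, hθle]
      set t : unitInterval := ⟨tv, htv01⟩ with ht
      have hdist_tv : dist (t : unitInterval) v₀ = θ * d := by
        rw [Subtype.dist_eq, Real.dist_eq]
        have : (t : ℝ) - (v₀ : ℝ) = θ * ((z : ℝ) - (v₀ : ℝ)) := by simp [ht, htv]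
        rw [this, abs_mul, abs_of_pos hθpos]
        congr 1
        rw [abs_sub_comm]
        rw [hddef, Subtype.dist_eq, Real.dist_eq]
      have hdist_lt : dist t v₀ < δ := by
        rw [hdist_tv]
        have : θ ≤ δ / (2 * d) := min_le_right _ _
        calc θ * d ≤ (δ / (2 * d)) * d := by nlinarith
          _ = δ / 2 := by field_simp
          _ < δ := by linarith
      have htm : f t = m := hδball hdist_lt
      have htz : dist t z = (1 - θ) * d := by
        rw [Subtype.dist_eq, Real.dist_eq]
        have : (t : ℝ) - (z : ℝ) = (1 - θ) * ((v₀ : ℝ) - (z : ℝ)) := by simp [ht, htv]; ring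
        rw [this, abs_mul, abs_of_pos (by linarith : (0:ℝ) < 1 - θ), hddef,
          Subtype.dist_eq, Real.dist_eq]
      have htT : t ∈ T := by
        refine ⟨?_, ?_, htm⟩
        · have h1 := hv₀T.1
          have h2 : min (z:ℝ) (w:ℝ) ≤ (z:ℝ) := min_le_left _ _
          have : (t : ℝ) = (1-θ) * (v₀:ℝ) + θ * (z:ℝ) := by simp [ht, htv]; ring
          rw [this]
          nlinarith
        · have h1 := hv₀T.2.1
          have h2 : (z:ℝ) ≤ max (z:ℝ) (w:ℝ) := le_max_left _ _
          have : (t : ℝ) = (1-θ) * (v₀:ℝ) + θ * (z:ℝ) := by simp [ht, htv]; ring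
          rw [this]
          nlinarith
      have h2 : dist v₀ z ≤ dist t z := hv₀min htT
      rw [htz] at h2
      nlinarith [h2]
    -- v₀ is within ε of z, so it lies in the fiber of i₀: contradiction
    have hv₀close : dist v₀ z ≤ dist w z := hv₀min hwT
    have hwz : dist w z < ε := mem_ball.mp hwball
    have : (⟨v₀, hv₀F⟩ : (Uᶜ : Set unitInterval)) ∈ ball z' ε := by
      rw [mem_ball, Subtype.dist_eq]
      calc dist (v₀ : unitInterval) z ≤ dist w z := hv₀close
        _ < ε := hwz
    have : f v₀ = i₀ := hball this
    exact hmne (by rw [← hfv₀, this])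

end Sierp

/-- If `G ≤ H` are subgroups of `π₁(X,x₀)` with `G` normal in
`π₁(X,x₀)`, `H/G` countable and `X` `(H,G)`-homotopically Hausdorff, then the
natural map `X̂_G → X̂_H` has the uniqueness of path lifts property. -/
theorem pathSpaceProj_uniqueness_of_path_lifts {X : Type*} [TopologicalSpace X]
    (x₀ : X) (G H : Subgroup (FundamentalGroup X x₀)) (hGH : G ≤ H)
    (hnorm : G.Normal) (hcount : Countable (H ⧸ G.subgroupOf H))
    (hHH : HomotopicallyHausdorffRel x₀ H G) :
    letI : TopologicalSpace (PathSpace G) := whiskerTopology G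
    ∀ α β : C(unitInterval, PathSpace G),
      (∀ t, pathSpaceProj hGH (α t) = pathSpaceProj hGH (β t)) → α 0 = β 0 → α = β := by
  intro α β hproj h0
  classical
  letI : TopologicalSpace (PathSpace G) := whiskerTopology G
  choose a ha using fun t => Quot.exists_rep (α t)
  choose b hb using fun t => Quot.exists_rep (β t)
  have ha : ∀ t, PathSpace.mk G (a t) = α t := ha
  have hb : ∀ t, PathSpace.mk G (b t) = β t := hb
  have hrelH : ∀ t, relH H (a t) (b t) := by
    intro t
    apply mk_eq_iff.mp
    have h1 : pathSpaceProj hGH (PathSpace.mk G (a t)) = PathSpace.mk H (a t) := rfl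
    have h2 : pathSpaceProj hGH (PathSpace.mk G (b t)) = PathSpace.mk H (b t) := rfl
    rw [← h1, ← h2, ha, hb]
    exact hproj t
  set e : ∀ t, (a t).1 = (b t).1 := fun t => (hrelH t).choose with he
  have hH' : ∀ t, loopCls ((a t).2.trans (((b t).2.cast rfl (e t)).symm)) ∈ H :=
    fun t => (hrelH t).choose_spec
  set h : unitInterval → H := fun t => ⟨_, hH' t⟩ with hhdef
  set f : unitInterval → H ⧸ G.subgroupOf H := fun t => QuotientGroup.mk (h t) with hfdef
  -- all fibers of `f` are closed
  have hfibc : ∀ c, IsClosed (f ⁻¹' {c}) := by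
    intro c
    obtain ⟨k, rfl⟩ := QuotientGroup.mk_surjective c
    rw [← isOpen_compl_iff, isOpen_iff_mem_nhds]
    intro t ht
    have htne : f t ≠ QuotientGroup.mk k := ht
    set hval : H := k * (h t)⁻¹ with hvaldef
    have hvalnG : (hval : FundamentalGroup X x₀) ∉ G := by
      intro hmem
      apply htne
      rw [hfdef]
      rw [QuotientGroup.eq, Subgroup.mem_subgroupOf]
      have hmem' : (k : FundamentalGroup X x₀) * ((h t : FundamentalGroup X x₀))⁻¹ ∈ G := by
        have : (hval : FundamentalGroup X x₀)
            = (k : FundamentalGroup X x₀) * ((h t : FundamentalGroup X x₀))⁻¹ := by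
          push_cast [hvaldef]; rfl
        rwa [this] at hmem
      have h2 := hnorm.conj_mem _ hmem' ((h t : FundamentalGroup X x₀))⁻¹
      have h3 : ((h t : FundamentalGroup X x₀))⁻¹ * (↑k * (↑(h t))⁻¹) * (↑(h t))⁻¹⁻¹
          = ((h t : FundamentalGroup X x₀))⁻¹ * ↑k := by group
      rw [h3] at h2
      have h4 : ((((h t)⁻¹ * k : H)) : FundamentalGroup X x₀)
          = ((h t : FundamentalGroup X x₀))⁻¹ * ↑k := by push_cast; rfl
      rwa [h4]
    obtain ⟨U, hUo, hxU, hloop⟩ := hHH _ hval.2 hvalnG (b t).1 (b t).2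
    have haU : (a t).1 ∈ U := by rw [e t]; exact hxU
    have hmema : α t ∈ whiskerBasic G (a t) U := by
      rw [← ha t]; exact self_mem_whiskerBasic haU
    have hmemb : β t ∈ whiskerBasic G (b t) U := by
      rw [← hb t]; exact self_mem_whiskerBasic hxU
    have hnhds : (α ⁻¹' whiskerBasic G (a t) U ∩ β ⁻¹' whiskerBasic G (b t) U) ∈ nhds t :=
      Filter.inter_mem
        (((isOpen_whiskerBasic hUo haU).preimage α.continuous).mem_nhds hmema)
        (((isOpen_whiskerBasic hUo hxU).preimage β.continuous).mem_nhds hmemb)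
    refine Filter.mem_of_superset hnhds ?_
    rintro s ⟨hsa, hsb⟩ hfs
    have hfs : f s = QuotientGroup.mk k := hfs
    obtain ⟨a', γ, hγU, hrela, hsa'⟩ := hsa
    obtain ⟨b', δ, hδU, hrelb, hsb'⟩ := hsb
    have hAs : PathSpace.mk G (a s) = PathSpace.mk G ⟨a'.1, (a t).2.trans γ⟩ := by
      rw [ha s, hsa']; exact Quot.sound hrela
    have hBs : PathSpace.mk G (b s) = PathSpace.mk G ⟨b'.1, (b t).2.trans δ⟩ := by
      rw [hb s, hsb']; exact Quot.sound hrelb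
    have eA : (a s).1 = a'.1 := (mk_eq_iff.mp hAs).1
    have eB : (b s).1 = b'.1 := (mk_eq_iff.mp hBs).1
    have e2 : a'.1 = b'.1 := eA.symm.trans ((e s).trans eB)
    obtain ⟨g₁, hg₁, g₂, hg₂, hDp⟩ :=
      keyD (G := G) (a := a s) (b := b s) (a' := ⟨a'.1, (a t).2.trans γ⟩)
        (b' := ⟨b'.1, (b t).2.trans δ⟩) (e s) e2 (mk_eq_iff.mp hAs) (mk_eq_iff.mp hBs)
    have hD2H : loopCls (((a t).2.trans γ).trans ((((b t).2.trans δ).cast rfl e2).symm)) ∈ H := by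
      rw [hDp]
      exact H.mul_mem (H.mul_mem (hGH hg₁) (h s).2) (hGH hg₂)
    set h2 : H := ⟨_, hD2H⟩ with hh2def
    have hquot : (QuotientGroup.mk (h s) : H ⧸ G.subgroupOf H) = QuotientGroup.mk h2 :=
      quot_congr hnorm (h s) h2 hg₁ hg₂ hDp
    have hfs2 : (QuotientGroup.mk h2 : H ⧸ G.subgroupOf H) = QuotientGroup.mk k := by
      rw [← hquot]; exact hfs
    have hgval : ((h2 : FundamentalGroup X x₀))⁻¹ * ↑k ∈ G := by
      rw [QuotientGroup.eq, Subgroup.mem_subgroupOf] at hfs2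
      have h4 : (((h2⁻¹ * k : H)) : FundamentalGroup X x₀)
          = ((h2 : FundamentalGroup X x₀))⁻¹ * ↑k := by push_cast; rfl
      rwa [h4] at hfs2
    set εp : Path (b t).1 (b t).1 := (γ.cast (e t).symm rfl).trans ((δ.cast rfl e2).symm)
      with hεp
    have hrange : Set.range εp ⊆ U := by
      rw [hεp, Path.trans_range]
      apply Set.union_subset
      · exact hγU
      · rw [Path.symm_range]; exact hδU
    have hstar := PL6 (a t).2 (b t).2 γ δ (e t) e2
    set W : FundamentalGroup X x₀ := loopCls (((b t).2.trans εp).trans (b t).2.symm) with hWdef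
    have hg' : W * (h t : FundamentalGroup X x₀) * (↑k)⁻¹ ∈ G := by
      rw [hstar]
      -- goal : h2.val * k⁻¹ ∈ G
      have h5 : ((h2 : FundamentalGroup X x₀))⁻¹ * ↑k ∈ G := hgval
      have h6 : (↑k)⁻¹ * (h2 : FundamentalGroup X x₀) ∈ G := by
        have := G.inv_mem h5
        rwa [mul_inv_rev, inv_inv] at this
      have h7 := hnorm.conj_mem _ h6 (k : FundamentalGroup X x₀)
      have h8 : (k : FundamentalGroup X x₀) * ((↑k)⁻¹ * ↑h2) * (↑k)⁻¹
          = (h2 : FundamentalGroup X x₀) * (↑k)⁻¹ := by group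
      rwa [h8] at h7
    apply hloop εp hrange _ hg'
    push_cast [hvaldef]
    group
    exact hWdef
  -- conclude via the Sierpiński-type argument
  have hconst := sierpinski_interval f hfibc
  have hf0 : h 0 ∈ G.subgroupOf H := by
    rw [Subgroup.mem_subgroupOf]
    have : PathSpace.mk G (a 0) = PathSpace.mk G (b 0) := by rw [ha 0, hb 0]; exact h0
    obtain ⟨e', m⟩ := mk_eq_iff.mp this
    exact m
  refine ContinuousMap.ext fun t => ?_
  have hft : f t = 1 := by
    rw [hconst t 0]
    exact (QuotientGroup.eq_one_iff _).mpr hf0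
  have hmem : h t ∈ G.subgroupOf H := (QuotientGroup.eq_one_iff _).mp hft
  rw [← ha t, ← hb t]
  exact Quot.sound ⟨e t, Subgroup.mem_subgroupOf.mp hmem⟩
end

section
/- Let X be a path-connected space, x₀ ∈ X, and H a subgroup of π₁(X,x₀). The endpoint projection p_H : X̂_H → X has the unique path lifting property if and only if the image of the induced homomorphism π₁(p_H) : π₁(X̂_H, x̂₀) → π₁(X,x₀) is contained in H. -/
/-! ### Auxiliary machinery -/

noncomputable section Aux
open CategoryTheory unitInterval

instance : ContractibleSpace unitInterval :=
  (convex_Icc (0:ℝ) 1).contractibleSpace ⟨0, by norm_num⟩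

variable {X : Type*} [TopologicalSpace X]

/-- An element of the fundamental group as a morphism of the fundamental groupoid. -/
def FundamentalGroup.hom {x : X} (a : FundamentalGroup X x) :
    FundamentalGroupoid.mk x ⟶ FundamentalGroupoid.mk x := a

lemma fg_ext {x : X} {a b : FundamentalGroup X x} (h : a.hom = b.hom) : a = b := h

@[simp] lemma Path.cast_rfl' {x y : X} (P : Path x y) (hx : x = x) (hy : y = y) :
    P.cast hx hy = P := rfl

/-- The homotopy class of a path, as a morphism in the fundamental groupoid. -/
def hcl {x y : X} (p : Path x y) :
    FundamentalGroupoid.mk x ⟶ FundamentalGroupoid.mk y := ⟦p⟧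

lemma hcl_congr {x y : X} {p q : Path x y} (h : p.Homotopic q) : hcl p = hcl q :=
  Quotient.sound h

@[simp] lemma hcl_trans {x y z : X} (p : Path x y) (q : Path y z) :
    hcl (p.trans q) = hcl p ≫ hcl q := rfl

@[simp] lemma hcl_refl (x : X) : hcl (Path.refl x) = 𝟙 (FundamentalGroupoid.mk x) := rfl

@[simp] lemma hcl_symm {x y : X} (p : Path x y) : hcl p.symm = inv (hcl p) := by
  symm
  apply IsIso.inv_eq_of_hom_inv_id
  rw [← hcl_trans, ← hcl_refl x]
  exact (hcl_congr ⟨Path.Homotopy.reflTransSymm p⟩).symm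

@[simp] lemma hcl_cast {x y x' y' : X} (P : Path x y) (hx : x' = x) (hy : y' = y) :
    hcl (P.cast hx hy) =
      eqToHom (by rw [hx]) ≫ hcl P ≫ eqToHom (by rw [hy]) := by
  subst hx; subst hy; simp

@[simp] lemma loopCls_hom_s19 {x : X} (p : Path x x) : (loopCls p).hom = hcl p := rfl

@[simp] lemma fg_mul_hom {x : X} (a b : FundamentalGroup X x) :
    (a * b).hom = b.hom ≫ a.hom := rfl

@[simp] lemma fg_hom_id {x : X} :
    FundamentalGroup.hom (𝟙 (FundamentalGroupoid.mk x)) = 𝟙 _ := rfl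

@[simp] lemma fg_hom_comp {x : X} (a b : FundamentalGroupoid.mk x ⟶ FundamentalGroupoid.mk x) :
    FundamentalGroup.hom (a ≫ b) = FundamentalGroup.hom a ≫ FundamentalGroup.hom b := rfl

@[simp] lemma fg_one_hom {x : X} : (1 : FundamentalGroup X x).hom = 𝟙 _ := rfl

@[simp] lemma fg_inv_hom {x : X} (a : FundamentalGroup X x) :
    (a⁻¹).hom = inv a.hom := Groupoid.inv_eq_inv a.hom

variable {x₀ : X}

/-- The "difference class" of two paths with the same endpoints. -/
noncomputable def dd {y : X} (A B : Path x₀ y) : FundamentalGroup X x₀ :=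
  loopCls (A.trans B.symm)

@[simp] lemma dd_hom {y : X} (A B : Path x₀ y) :
    (dd A B).hom = hcl A ≫ inv (hcl B) := by
  simp [dd]

@[simp] lemma dd_self {y : X} (A : Path x₀ y) : dd A A = 1 := by
  apply fg_ext; simp

lemma dd_comp {y : X} (A B C : Path x₀ y) : dd A C = dd B C * dd A B := by
  apply fg_ext; simp

lemma dd_symm {y : X} (A B : Path x₀ y) : dd B A = (dd A B)⁻¹ := by
  apply eq_inv_of_mul_eq_one_left
  rw [← dd_comp, dd_self]

/-! ### seg: straight subpaths -/

lemma combo_mem (u t s : unitInterval) :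
    (1 - (u:ℝ)) * t + u * s ∈ unitInterval := by
  constructor
  · have := u.2.1; have := u.2.2; have := t.2.1; have := s.2.1
    nlinarith
  · have := u.2.1; have := u.2.2; have := t.2.2; have := s.2.2
    nlinarith

/-- straight-parameter subpath of a continuous map -/
def seg (f : C(unitInterval, X)) (t s : unitInterval) : Path (f t) (f s) where
  toFun u := f ⟨(1 - (u:ℝ)) * t + u * s, combo_mem u t s⟩
  continuous_toFun := by
    apply f.continuous.comp
    apply Continuous.subtype_mk
    fun_prop
  source' := by norm_num
  target' := by norm_num

@[simp] lemma seg_apply (f : C(unitInterval, X)) (t s u : unitInterval) :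
    seg f t s u = f ⟨(1 - (u:ℝ)) * t + u * s, combo_mem u t s⟩ := rfl

lemma seg_self (f : C(unitInterval, X)) (t : unitInterval) :
    seg f t t = Path.refl (f t) := by
  ext u
  show f _ = f t
  congr 1
  ext
  push_cast
  ring

lemma seg_eq_map (f : C(unitInterval, X)) (t s : unitInterval) :
    seg f t s = (seg (ContinuousMap.id _) t s).map f.continuous := rfl

lemma seg_trans_homotopic (f : C(unitInterval, X)) (t s r : unitInterval) :
    ((seg f t s).trans (seg f s r)).Homotopic (seg f t r) := by
  have := Path.Homotopic.map (SimplyConnectedSpace.paths_homotopic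
    ((seg (ContinuousMap.id I) t s).trans (seg (ContinuousMap.id I) s r))
    (seg (ContinuousMap.id I) t r)) f
  rw [Path.map_trans] at this
  exact this

@[simp] lemma hcl_seg_trans (f : C(unitInterval, X)) (t s r : unitInterval) :
    hcl (seg f t s) ≫ hcl (seg f s r) = hcl (seg f t r) := by
  rw [← hcl_trans]
  exact hcl_congr (seg_trans_homotopic f t s r)

lemma seg_zero_one {x y : X} (η : Path x y) :
    seg η.toContinuousMap 0 1 = η.cast η.source η.target := by
  ext u
  show η _ = η u
  congr 1
  ext
  push_cast
  ring

/-! ### relH as an equivalence; PathSpace helpers -/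

variable {H : Subgroup (FundamentalGroup X x₀)}

lemma relH_iff {y : X} (A B : Path x₀ y) : relH H ⟨y, A⟩ ⟨y, B⟩ ↔ dd A B ∈ H := by
  constructor
  · rintro ⟨e, h⟩
    rwa [Path.cast_rfl'] at h
  · intro h
    exact ⟨rfl, by rwa [Path.cast_rfl']⟩

lemma relH_destruct {y : X} {A : Path x₀ y} {b : PathFrom X x₀} (h : relH H ⟨y, A⟩ b) :
    ∃ B : Path x₀ y, b = ⟨y, B⟩ ∧ dd A B ∈ H := by
  obtain ⟨b₁, b₂⟩ := b
  obtain ⟨e, h⟩ := h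
  dsimp at e
  subst e
  rw [Path.cast_rfl'] at h
  exact ⟨b₂, rfl, h⟩

lemma relH_equiv : Equivalence (relH H) := by
  constructor
  · rintro ⟨y, A⟩
    exact (relH_iff A A).mpr (by rw [dd_self]; exact one_mem H)
  · rintro ⟨y, A⟩ b h
    obtain ⟨B, rfl, hd⟩ := relH_destruct h
    exact (relH_iff B A).mpr (by rw [dd_symm]; exact inv_mem hd)
  · rintro ⟨y, A⟩ b c h₁ h₂
    obtain ⟨B, rfl, hd₁⟩ := relH_destruct h₁
    obtain ⟨C, rfl, hd₂⟩ := relH_destruct h₂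
    exact (relH_iff A C).mpr (by rw [dd_comp A B C]; exact mul_mem hd₂ hd₁)

lemma mk_eq_mk_iff {a b : PathFrom X x₀} :
    PathSpace.mk H a = PathSpace.mk H b ↔ relH H a b := by
  show @Eq (Quot (relH H)) (Quot.mk _ a) (Quot.mk _ b) ↔ relH H a b
  rw [Quot.eq]
  exact Equivalence.eqvGen_iff relH_equiv

lemma mk_eq_mk_iff' {y y' : X} (e : y = y') (A : Path x₀ y) (B : Path x₀ y') :
    PathSpace.mk H ⟨y, A⟩ = PathSpace.mk H ⟨y', B⟩ ↔ dd A (B.cast rfl e) ∈ H := by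
  subst e
  rw [Path.cast_rfl', mk_eq_mk_iff, relH_iff]

@[simp] lemma endpointProj_mk (a : PathFrom X x₀) :
    endpointProj H (PathSpace.mk H a) = a.1 := rfl

end Aux

section Top
open CategoryTheory unitInterval

variable {X : Type*} [TopologicalSpace X] {x₀ : X} {H : Subgroup (FundamentalGroup X x₀)}

lemma continuous_endpointProj :
    @Continuous _ _ (whiskerTopology H) _ (endpointProj H) := by
  letI := whiskerTopology H
  rw [continuous_def]
  intro U hU
  have hrw : endpointProj H ⁻¹' U = ⋃ a ∈ {a : PathFrom X x₀ | a.1 ∈ U}, whiskerBasic H a U := by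
    ext q
    simp only [Set.mem_preimage, Set.mem_iUnion]
    constructor
    · intro hq
      obtain ⟨a, rfl⟩ := Quot.exists_rep q
      have hq' : a.1 ∈ U := hq
      refine ⟨a, hq', a, Path.refl a.1, ?_, ?_, rfl⟩
      · rintro x ⟨u, rfl⟩
        exact hq'
      · obtain ⟨y, A⟩ := a
        refine (relH_iff _ _).mpr ?_
        have : dd A (A.trans (Path.refl y)) = 1 := fg_ext (by simp)
        rw [this]; exact one_mem H
    · rintro ⟨a, ha, b, γ, hγU, hrel, rfl⟩
      exact hγU ⟨1, γ.target⟩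
  rw [hrw]
  exact isOpen_biUnion fun a ha => TopologicalSpace.GenerateOpen.basic _ ⟨a, U, hU, ha, rfl⟩

variable (H)

/-- The standard lift of `α` starting at the class of `A`. -/
noncomputable def stdLift (α : C(unitInterval, X)) (A : Path x₀ (α 0)) (t : unitInterval) :
    PathSpace H :=
  PathSpace.mk H ⟨α t, A.trans (seg α 0 t)⟩

variable {H}

@[simp] lemma endpointProj_stdLift (α : C(unitInterval, X)) (A : Path x₀ (α 0))
    (t : unitInterval) : endpointProj H (stdLift H α A t) = α t := rfl

lemma continuous_stdLift (α : C(unitInterval, X)) (A : Path x₀ (α 0)) :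
    @Continuous _ _ _ (whiskerTopology H) (stdLift H α A) := by
  rw [whiskerTopology, continuous_generateFrom_iff]
  rintro S ⟨a', U, hU, ha'U, rfl⟩
  rw [isOpen_iff_mem_nhds]
  rintro t ⟨b, γ, hγU, hrel, heq⟩
  have heq' : relH H ⟨α t, A.trans (seg α 0 t)⟩ b := mk_eq_mk_iff.mp heq
  obtain ⟨B, rfl, hdB⟩ := relH_destruct heq'
  have hdB' : dd B (a'.2.trans γ) ∈ H := (relH_iff _ _).mp hrel
  have hαtU : α t ∈ U := hγU ⟨1, γ.target⟩
  have hU' : α ⁻¹' U ∈ nhds t := (hU.preimage α.continuous).mem_nhds hαtU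
  obtain ⟨ε, hε, hball⟩ := Metric.mem_nhds_iff.mp hU'
  refine Filter.mem_of_superset (Metric.ball_mem_nhds t hε) ?_
  intro s hs
  have hseg : ∀ u : unitInterval, (⟨(1 - (u:ℝ)) * t + u * s, combo_mem u t s⟩ : unitInterval)
      ∈ Metric.ball t ε := by
    intro u
    rw [Metric.mem_ball] at hs ⊢
    rw [Subtype.dist_eq, Real.dist_eq] at hs ⊢
    have h1 : ((⟨(1 - (u:ℝ)) * t + u * s, combo_mem u t s⟩ : unitInterval) : ℝ) - t
        = u * ((s:ℝ) - t) := by push_cast; ring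
    rw [h1, abs_mul, abs_of_nonneg u.2.1]
    calc (u:ℝ) * |(s:ℝ) - t| ≤ 1 * |(s:ℝ) - t| := by
          apply mul_le_mul_of_nonneg_right u.2.2 (abs_nonneg _)
      _ < ε := by rw [one_mul]; exact hs
  refine ⟨⟨α s, A.trans (seg α 0 s)⟩, γ.trans (seg α t s), ?_, ?_, rfl⟩
  · rw [Path.trans_range]
    refine Set.union_subset hγU ?_
    rintro x ⟨u, rfl⟩
    exact hball (hseg u)
  · refine (relH_iff _ _).mpr ?_
    have key : dd (A.trans (seg α 0 s)) (a'.2.trans (γ.trans (seg α t s)))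
        = dd B (a'.2.trans γ) * dd (A.trans (seg α 0 t)) B := by
      apply fg_ext
      have hsplit : hcl (seg α 0 s) = hcl (seg α 0 t) ≫ hcl (seg α t s) :=
        (hcl_seg_trans α 0 t s).symm
      simp only [dd_hom, fg_mul_hom, hcl_trans, hsplit, IsIso.inv_comp, Category.assoc,
        IsIso.inv_hom_id_assoc, IsIso.hom_inv_id_assoc]
    rw [key]
    exact mul_mem hdB' hdB

end Top

section Key
open CategoryTheory unitInterval

variable {X : Type*} [TopologicalSpace X] {x₀ : X} {H : Subgroup (FundamentalGroup X x₀)}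

local instance instPS : TopologicalSpace (PathSpace H) := whiskerTopology H

/-- The standard lift, as a path in `X̂_H` (w.r.t. the whisker topology). -/
noncomputable def stdLiftPath (α : C(unitInterval, X)) (A : Path x₀ (α 0)) :
    Path (PathSpace.mk H ⟨α 0, A⟩) (PathSpace.mk H ⟨α 1, A.trans (seg α 0 1)⟩) where
  toFun := stdLift H α A
  continuous_toFun := continuous_stdLift α A
  source' := by
    show PathSpace.mk H ⟨α 0, A.trans (seg α 0 0)⟩ = PathSpace.mk H ⟨α 0, A⟩
    rw [mk_eq_mk_iff, relH_iff]
    have h1 : dd (A.trans (seg α 0 0)) A = 1 := fg_ext (by simp [seg_self])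
    rw [h1]; exact one_mem H
  target' := rfl

@[simp] lemma stdLiftPath_apply (α : C(unitInterval, X)) (A : Path x₀ (α 0))
    (u : unitInterval) :
    (stdLiftPath α A) u = stdLift H α A u := rfl


/-- Any continuous lift agrees with the standard lift (given the π₁ condition). -/
lemma lift_eq_stdLift
    (hR : ∀ (γ : C(unitInterval, PathSpace H)) (δ : Path x₀ x₀),
      γ 0 = PathSpace.base H → γ 1 = PathSpace.base H →
      (∀ t, endpointProj H (γ t) = δ t) → loopCls δ ∈ H)
    (β : C(unitInterval, PathSpace H))
    (α : C(unitInterval, X)) (hproj : ∀ u, endpointProj H (β u) = α u)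
    (A : Path x₀ (α 0)) (hβ0 : β 0 = PathSpace.mk H ⟨α 0, A⟩) (t : unitInterval) :
    β t = stdLift H α A t := by
  obtain ⟨b, hb⟩ := Quot.exists_rep (β t)
  obtain ⟨y', B⟩ := b
  have e' : y' = α t := by
    have h := hproj t
    rw [← hb] at h
    exact h
  subst e'
  -- the three legs of the loop in X̂_H
  have e1 : PathSpace.base H = PathSpace.mk H ⟨A.toContinuousMap 0,
      (Path.refl x₀).cast rfl (show A.toContinuousMap 0 = x₀ from A.source)⟩ := by
    rw [PathSpace.base, mk_eq_mk_iff' (show x₀ = A.toContinuousMap 0 from A.source.symm)]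
    have h1 : dd (Path.refl x₀) (((Path.refl x₀).cast rfl
        (show A.toContinuousMap 0 = x₀ from A.source)).cast rfl
        (show x₀ = A.toContinuousMap 0 from A.source.symm)) = 1 :=
      fg_ext (by simp)
    rw [h1]; exact one_mem H
  have e2 : PathSpace.mk H ⟨α 0, A⟩ = PathSpace.mk H ⟨A.toContinuousMap 1,
      ((Path.refl x₀).cast rfl (show A.toContinuousMap 0 = x₀ from A.source)).trans
        (seg A.toContinuousMap 0 1)⟩ := by
    rw [mk_eq_mk_iff' (show α 0 = A.toContinuousMap 1 from A.target.symm)]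
    have h1 : dd A ((((Path.refl x₀).cast rfl
          (show A.toContinuousMap 0 = x₀ from A.source)).trans
          (seg A.toContinuousMap 0 1)).cast rfl
          (show α 0 = A.toContinuousMap 1 from A.target.symm)) = 1 :=
      fg_ext (by rw [seg_zero_one]; simp)
    rw [h1]; exact one_mem H
  have e3 : PathSpace.mk H ⟨α t, B⟩ = PathSpace.mk H ⟨B.symm.toContinuousMap 0,
      B.cast rfl (show B.symm.toContinuousMap 0 = α t from B.symm.source)⟩ := by
    rw [mk_eq_mk_iff' (show α t = B.symm.toContinuousMap 0 from B.symm.source.symm)]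
    have h1 : dd B ((B.cast rfl (show B.symm.toContinuousMap 0 = α t from B.symm.source)).cast
          rfl (show α t = B.symm.toContinuousMap 0 from B.symm.source.symm)) = 1 :=
      fg_ext (by simp)
    rw [h1]; exact one_mem H
  have e4 : PathSpace.base H = PathSpace.mk H ⟨B.symm.toContinuousMap 1,
      (B.cast rfl (show B.symm.toContinuousMap 0 = α t from B.symm.source)).trans
        (seg B.symm.toContinuousMap 0 1)⟩ := by
    rw [PathSpace.base, mk_eq_mk_iff' (show x₀ = B.symm.toContinuousMap 1 from B.symm.target.symm)]
    have h1 : dd (Path.refl x₀)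
        (((B.cast rfl (show B.symm.toContinuousMap 0 = α t from B.symm.source)).trans
          (seg B.symm.toContinuousMap 0 1)).cast rfl
          (show x₀ = B.symm.toContinuousMap 1 from B.symm.target.symm)) = 1 :=
      fg_ext (by rw [seg_zero_one]; simp)
    rw [h1]; exact one_mem H
  let P1 : Path (PathSpace.base H) (PathSpace.mk H ⟨α 0, A⟩) :=
    (stdLiftPath A.toContinuousMap
      ((Path.refl x₀).cast rfl (show A.toContinuousMap 0 = x₀ from A.source))).cast e1 e2
  let P2 : Path (PathSpace.mk H ⟨α 0, A⟩) (PathSpace.mk H ⟨α t, B⟩) :=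
    (seg β 0 t).cast hβ0.symm hb
  let P3 : Path (PathSpace.mk H ⟨α t, B⟩) (PathSpace.base H) :=
    (stdLiftPath B.symm.toContinuousMap
      (B.cast rfl (show B.symm.toContinuousMap 0 = α t from B.symm.source))).cast e3 e4
  let Γ : Path (PathSpace.base H) (PathSpace.base H) := P1.trans (P2.trans P3)
  have hP1 : P1.map continuous_endpointProj = A := by
    ext u
    rfl
  have hP2 : P2.map continuous_endpointProj = seg α 0 t := by
    ext u
    exact hproj _
  have hP3 : P3.map continuous_endpointProj = B.symm := by
    ext u
    rfl
  have hmap : Γ.map continuous_endpointProj = A.trans ((seg α 0 t).trans B.symm) := by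
    show (P1.trans (P2.trans P3)).map continuous_endpointProj = _
    rw [Path.map_trans, Path.map_trans, hP1, hP2, hP3]
    rfl
  have hH : loopCls (A.trans ((seg α 0 t).trans B.symm)) ∈ H := by
    rw [← hmap]
    exact hR Γ.toContinuousMap (Γ.map continuous_endpointProj) Γ.source Γ.target fun u => rfl
  rw [← hb]
  show PathSpace.mk H ⟨α t, B⟩ = PathSpace.mk H ⟨α t, A.trans (seg α 0 t)⟩
  rw [mk_eq_mk_iff, relH_iff]
  have h2 : dd B (A.trans (seg α 0 t))
      = (loopCls (A.trans ((seg α 0 t).trans B.symm)))⁻¹ :=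
    fg_ext (by simp)
  rw [h2]
  exact inv_mem hH
end Key

/-- For a path-connected space `X`, `x₀ ∈ X` and a subgroup `H` of
`π₁(X,x₀)`, the endpoint projection `p_H : X̂_H → X` has the unique path lifting
property if and only if the image of `π₁(p_H) : π₁(X̂_H, x̂₀) → π₁(X,x₀)` is contained
in `H`. -/
theorem endpointProj_uplp_iff_image_piOne_le {X : Type*} [TopologicalSpace X]
    [PathConnectedSpace X] (x₀ : X) (H : Subgroup (FundamentalGroup X x₀)) :
    letI : TopologicalSpace (PathSpace H) := whiskerTopology H
    ((∀ (α : C(unitInterval, X)) (q : PathSpace H), endpointProj H q = α 0 →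
        ∃ β : C(unitInterval, PathSpace H), β 0 = q ∧ ∀ t, endpointProj H (β t) = α t) ∧
      (∀ β₁ β₂ : C(unitInterval, PathSpace H),
        (∀ t, endpointProj H (β₁ t) = endpointProj H (β₂ t)) → β₁ 0 = β₂ 0 → β₁ = β₂)) ↔
    (∀ (γ : C(unitInterval, PathSpace H)) (δ : Path x₀ x₀),
      γ 0 = PathSpace.base H → γ 1 = PathSpace.base H →
      (∀ t, endpointProj H (γ t) = δ t) → loopCls δ ∈ H) := by
  letI : TopologicalSpace (PathSpace H) := whiskerTopology H
  constructor
  · rintro ⟨hex, huni⟩ γ δ hγ0 hγ1 hproj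
    set A : Path x₀ (δ.toContinuousMap 0) :=
      (Path.refl x₀).cast rfl (show δ.toContinuousMap 0 = x₀ from δ.source) with hA
    set S : C(unitInterval, PathSpace H) :=
      ⟨stdLift H δ.toContinuousMap A, continuous_stdLift δ.toContinuousMap A⟩ with hS
    have hSproj : ∀ t, endpointProj H (S t) = δ t := fun t => rfl
    have hS0 : S 0 = PathSpace.base H := by
      show PathSpace.mk H ⟨δ.toContinuousMap 0, A.trans (seg δ.toContinuousMap 0 0)⟩
        = PathSpace.base H
      rw [PathSpace.base, mk_eq_mk_iff' (show δ.toContinuousMap 0 = x₀ from δ.source)]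
      have h1 : dd (A.trans (seg δ.toContinuousMap 0 0))
          ((Path.refl x₀).cast rfl (show δ.toContinuousMap 0 = x₀ from δ.source)) = 1 :=
        fg_ext (by simp [hA, seg_self])
      rw [h1]; exact one_mem H
    have hγS : γ = S := by
      refine huni γ S (fun t => by rw [hproj t, hSproj t]) (by rw [hγ0, hS0])
    have h1' : PathSpace.base H
        = PathSpace.mk H ⟨δ.toContinuousMap 1, A.trans (seg δ.toContinuousMap 0 1)⟩ := by
      rw [← hγ1, hγS]; rfl
    rw [PathSpace.base,
      mk_eq_mk_iff' (show x₀ = δ.toContinuousMap 1 from δ.target.symm)] at h1'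
    have h2 : loopCls δ = (dd (Path.refl x₀) ((A.trans (seg δ.toContinuousMap 0 1)).cast rfl
        (show x₀ = δ.toContinuousMap 1 from δ.target.symm)))⁻¹ :=
      fg_ext (by rw [seg_zero_one]; simp [hA])
    rw [h2]
    exact inv_mem h1'
  · intro hR
    constructor
    · intro α q hq
      obtain ⟨a, rfl⟩ := Quot.exists_rep q
      obtain ⟨y, A⟩ := a
      have e : y = α 0 := hq
      subst e
      refine ⟨⟨stdLift H α A, continuous_stdLift α A⟩, ?_, fun t => rfl⟩
      show PathSpace.mk H ⟨α 0, A.trans (seg α 0 0)⟩ = PathSpace.mk H ⟨α 0, A⟩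
      rw [mk_eq_mk_iff, relH_iff]
      have h1 : dd (A.trans (seg α 0 0)) A = 1 := fg_ext (by simp [seg_self])
      rw [h1]; exact one_mem H
    · intro β₁ β₂ hproj h0
      set α : C(unitInterval, X) :=
        ⟨fun u => endpointProj H (β₁ u), continuous_endpointProj.comp β₁.continuous⟩ with hα
      obtain ⟨a, ha⟩ := Quot.exists_rep (β₁ 0)
      obtain ⟨y, A⟩ := a
      have e : y = α 0 := congrArg (endpointProj H) ha
      subst e
      have h1 := lift_eq_stdLift hR β₁ α (fun u => rfl) A ha.symm
      have h2 := lift_eq_stdLift hR β₂ α (fun u => (hproj u).symm) A (by rw [← h0]; exact ha.symm)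
      ext t
      rw [h1 t, h2 t]
end
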